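/- For the family Q_{t,s} = [[2,0,0,t],[0,1,s,0],[0,s,−1,0],[t,0,0,−2]] with t,s ≥ 0 and p = t+s, the maximum of (x⊗y)† Q_{t,s} (x⊗y) over unit vectors x,y ∈ ℂ² equals 2 if 0 ≤ p < √3, and equals √((1+p²)(9+p²))/(2p) if p ≥ √3; the minimum equals the negative of the maximum. -/

import Mathlib

set_option maxHeartbeats 1000000


open Matrix

/-- Kronecker product vector of `x, y ∈ ℂ²`. -/
def kvec (x y : Fin 2 → ℂ) : Fin 4 → ℂ := ![x 0 * y 0, x 0 * y 1, x 1 * y 0, x 1 * y 1]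

section Aux

open Complex

lemma keyIneq (p c W γ : ℝ) (hp : 0 ≤ p) (hc : -1 ≤ c) (hc1 : c ≤ 1)
    (hW : 0 ≤ W) (hW2 : W^2 = 1 + p^2*(1-c^2))
    (hγ : γ = if p < Real.sqrt 3 then 2 else Real.sqrt ((1+p^2)*(9+p^2))/(2*p)) :
    3*c + W ≤ 2*γ := by
  by_cases hcase : p < Real.sqrt 3
  · rw [if_pos hcase] at hγ
    subst hγ
    have hp3 : p^2 < 3 := by
      nlinarith [Real.sqrt_nonneg 3,
        mul_self_lt_mul_self hp hcase, Real.mul_self_sqrt (by norm_num : (0:ℝ) ≤ 3)]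
    have h1 : W^2 ≤ (4-3*c)^2 := by
      rw [hW2]
      nlinarith [mul_nonneg (sub_nonneg.2 hc1) (show (0:ℝ) ≤ 15 - p^2 - (9+p^2)*c by nlinarith)]
    have h2 : W ≤ 4 - 3*c := by
      calc W = Real.sqrt (W^2) := (Real.sqrt_sq hW).symm
      _ ≤ Real.sqrt ((4-3*c)^2) := Real.sqrt_le_sqrt h1
      _ = 4 - 3*c := Real.sqrt_sq (by linarith)
    linarith
  · rw [if_neg hcase] at hγ
    push_neg at hcase
    have h3 : (0:ℝ) < Real.sqrt 3 := Real.sqrt_pos.2 (by norm_num)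
    have hppos : 0 < p := lt_of_lt_of_le h3 hcase
    have hp3 : 3 ≤ p^2 := by
      nlinarith [Real.mul_self_sqrt (by norm_num : (0:ℝ) ≤ 3), Real.sqrt_nonneg 3,
        mul_self_le_mul_self (Real.sqrt_nonneg 3) hcase]
    set s1 := Real.sqrt (1+p^2) with hs1def
    set s2 := Real.sqrt (9+p^2) with hs2def
    have hs1 : s1^2 = 1+p^2 := Real.sq_sqrt (by positivity)
    have hs2 : s2^2 = 9+p^2 := Real.sq_sqrt (by positivity)
    have hs1n : 0 ≤ s1 := Real.sqrt_nonneg _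
    have hs2n : 0 ≤ s2 := Real.sqrt_nonneg _
    have hG : Real.sqrt ((1+p^2)*(9+p^2)) = s1 * s2 := Real.sqrt_mul (by positivity) _
    rw [hG] at hγ
    subst hγ
    have hG4 : 4*p ≤ s1*s2 := by
      nlinarith [sq_nonneg (p^2-3), sq_nonneg (s1*s2 - 4*p), mul_nonneg hs1n hs2n]
    have hnum : 3*p*c ≤ s1*s2 := by nlinarith
    have h1 : (p*W)^2 ≤ (s1*s2 - 3*p*c)^2 := by
      have expand : (s1*s2 - 3*p*c)^2 - (p*W)^2 = (p*c*s2 - 3*s1)^2 := by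
        have e1 : (s1*s2)^2 = (1+p^2)*(9+p^2) := by rw [mul_pow, hs1, hs2]
        nlinarith [e1, hW2, hs1, hs2]
      nlinarith [sq_nonneg (p*c*s2 - 3*s1)]
    have h2 : p*W ≤ s1*s2 - 3*p*c := by
      calc p*W = Real.sqrt ((p*W)^2) := (Real.sqrt_sq (by positivity)).symm
      _ ≤ Real.sqrt ((s1*s2 - 3*p*c)^2) := Real.sqrt_le_sqrt h1
      _ = s1*s2 - 3*p*c := Real.sqrt_sq (by linarith)
    rw [← sub_nonneg]
    have : 2*(s1*s2/(2*p)) - (3*c+W) = (s1*s2 - 3*p*c - p*W)/p := by field_simp; ring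
    rw [this]
    exact div_nonneg (by linarith) hppos.le

lemma boundL (p a b γ : ℝ) (hp : 0 ≤ p) (ha0 : 0 ≤ a) (ha1 : a ≤ 1)
    (hb0 : 0 ≤ b) (hb1 : b ≤ 1)
    (hγ : γ = if p < Real.sqrt 3 then 2 else Real.sqrt ((1+p^2)*(9+p^2))/(2*p)) :
    3*a + b - 2 + 2*p*(Real.sqrt (a*(1-a)) * Real.sqrt (b*(1-b))) ≤ γ := by
  set u := Real.sqrt (a*(1-a)) with hudef
  set v := Real.sqrt (b*(1-b)) with hvdef
  have hu2 : u^2 = a*(1-a) := Real.sq_sqrt (by nlinarith)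
  have hv2 : v^2 = b*(1-b) := Real.sq_sqrt (by nlinarith)
  have hun : 0 ≤ u := Real.sqrt_nonneg _
  have hvn : 0 ≤ v := Real.sqrt_nonneg _
  set W := Real.sqrt (1 + 4*p^2*u^2) with hWdef
  have hW2 : W^2 = 1 + 4*p^2*u^2 := Real.sq_sqrt (by positivity)
  have hWn : 0 ≤ W := Real.sqrt_nonneg _
  have hcs : (2*b-1) + 4*p*u*v ≤ W := by
    have hsum : (2*b-1)^2 + (2*v)^2 = 1 := by nlinarith
    have hsq : ((2*b-1) + 4*p*u*v)^2 ≤ W^2 := by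
      nlinarith [sq_nonneg ((2*b-1)*(2*p*u) - 2*v)]
    nlinarith [sq_nonneg ((2*b-1) + 4*p*u*v - W), sq_nonneg ((2*b-1) + 4*p*u*v + W)]
  have hW2' : W^2 = 1 + p^2*(1-(2*a-1)^2) := by rw [hW2]; nlinarith
  have hkey := keyIneq p (2*a-1) W γ hp (by linarith) (by linarith) hWn hW2' hγ
  linarith

lemma coreId (p s1 s2 s3 : ℝ) (hp : 0 < p) (h1 : s1^2 = 1+p^2) (h2 : s2^2 = 9+p^2)
    (h3 : s3^2 = p^4-9) (hs1 : 0 < s1) (hs2 : 0 < s2) :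
    3*((1+3*s1/(p*s2))/2) + (1+s2/(p*s1))/2 - 2
      + 2*p*((s3/(2*p*s2))*(s3/(2*p*s1))) = s1*s2/(2*p) := by
  have key : 9*s1^2 + s2^2 + p^4 - 9 = s1^2*s2^2 := by
    linear_combination (9 - s2^2)*h1 - p^2*h2
  have hprod : (s3/(2*p*s2))*(s3/(2*p*s1)) = s3^2/(4*p^2*(s1*s2)) := by ring
  rw [hprod, h3]
  have expand : 3*((1+3*s1/(p*s2))/2) + (1+s2/(p*s1))/2 - 2 + 2*p*((p^4-9)/(4*p^2*(s1*s2)))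
      = (9*s1^2+s2^2+p^4-9)/(2*p*(s1*s2)) := by
    field_simp
    ring
  rw [expand, key]
  field_simp

lemma optData (p : ℝ) (hp3 : Real.sqrt 3 ≤ p) :
    ∃ α β : ℝ, 0 ≤ α ∧ α ≤ 1 ∧ 0 ≤ β ∧ β ≤ 1 ∧
      3*α + β - 2 + 2*p*(Real.sqrt (α*(1-α)) * Real.sqrt (β*(1-β)))
        = Real.sqrt ((1+p^2)*(9+p^2))/(2*p) := by
  have h3pos : (0:ℝ) < Real.sqrt 3 := Real.sqrt_pos.2 (by norm_num)
  have hp : 0 < p := lt_of_lt_of_le h3pos hp3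
  have hpsq : 3 ≤ p^2 := by
    nlinarith [Real.mul_self_sqrt (by norm_num : (0:ℝ) ≤ 3), Real.sqrt_nonneg 3,
      mul_self_le_mul_self (Real.sqrt_nonneg 3) hp3]
  have hp4 : 9 ≤ p^4 := by nlinarith
  set s1 := Real.sqrt (1+p^2) with hs1def
  set s2 := Real.sqrt (9+p^2) with hs2def
  set s3 := Real.sqrt (p^4-9) with hs3def
  have h1 : s1^2 = 1+p^2 := Real.sq_sqrt (by positivity)
  have h2 : s2^2 = 9+p^2 := Real.sq_sqrt (by positivity)
  have h3 : s3^2 = p^4-9 := Real.sq_sqrt (by linarith)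
  have hs1 : 0 < s1 := Real.sqrt_pos.2 (by positivity)
  have hs2 : 0 < s2 := Real.sqrt_pos.2 (by positivity)
  have hs3 : 0 ≤ s3 := Real.sqrt_nonneg _
  set c := 3*s1/(p*s2) with hcdef
  set d := s2/(p*s1) with hddef
  have hc0 : 0 ≤ c := by positivity
  have hd0 : 0 ≤ d := by positivity
  have hc1 : c ≤ 1 := by
    rw [hcdef, div_le_one (by positivity)]
    have hsq : (3*s1)^2 ≤ (p*s2)^2 := by nlinarith
    have := Real.sqrt_le_sqrt hsq
    rwa [Real.sqrt_sq (by positivity), Real.sqrt_sq (by positivity)] at this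
  have hd1 : d ≤ 1 := by
    rw [hddef, div_le_one (by positivity)]
    have hsq : s2^2 ≤ (p*s1)^2 := by nlinarith
    have := Real.sqrt_le_sqrt hsq
    rwa [Real.sqrt_sq (by positivity), Real.sqrt_sq (by positivity)] at this
  refine ⟨(1+c)/2, (1+d)/2, by linarith, by linarith, by linarith, by linarith, ?_⟩
  have hma : Real.sqrt ((1+c)/2*(1-(1+c)/2)) = s3/(2*p*s2) := by
    rw [← Real.sqrt_sq (show (0:ℝ) ≤ s3/(2*p*s2) by positivity)]
    congr 1
    rw [hcdef]
    field_simp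
    linear_combination p^2*h2 - 9*h1 - h3
  have hmb : Real.sqrt ((1+d)/2*(1-(1+d)/2)) = s3/(2*p*s1) := by
    rw [← Real.sqrt_sq (show (0:ℝ) ≤ s3/(2*p*s1) by positivity)]
    congr 1
    rw [hddef]
    field_simp
    linear_combination -(h2 + h3 - p^2*h1)
  rw [hma, hmb, Real.sqrt_mul (by positivity), ← hs1def, ← hs2def]
  have := coreId p s1 s2 s3 hp h1 h2 h3 hs1 hs2
  rw [hcdef, hddef] at *
  linarith [this]

lemma unitR (u v : ℝ) (h : u^2 + v^2 = 1) :
    star ![(u:ℂ), (v:ℂ)] ⬝ᵥ ![(u:ℂ), (v:ℂ)] = 1 := by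
  simp [dotProduct, Fin.sum_univ_two, Complex.conj_ofReal]
  push_cast [← Complex.ofReal_mul]
  norm_cast
  nlinarith

lemma EvalR (t s u1 u2 v1 v2 : ℝ) :
    (star (kvec ![(u1:ℂ), (u2:ℂ)] ![(v1:ℂ), (v2:ℂ)]) ⬝ᵥ
      (!![2, 0, 0, (t : ℂ); 0, 1, (s : ℂ), 0; 0, (s : ℂ), -1, 0; (t : ℂ), 0, 0, -2]).mulVec
      (kvec ![(u1:ℂ), (u2:ℂ)] ![(v1:ℂ), (v2:ℂ)])).re =
    2*(u1^2*v1^2) + u1^2*v2^2 - u2^2*v1^2 - 2*(u2^2*v2^2) + 2*(t+s)*(u1*u2*v1*v2) := by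
  simp [kvec, mulVec, dotProduct, Fin.sum_univ_four, Complex.mul_re, Complex.mul_im]
  ring

lemma expectRe (t s : ℝ) (x y : Fin 2 → ℂ) :
    (star (kvec x y) ⬝ᵥ (!![2, 0, 0, (t : ℂ); 0, 1, (s : ℂ), 0; 0, (s : ℂ), -1, 0; (t : ℂ), 0, 0, -2]).mulVec (kvec x y)).re =
    2 * (normSq (x 0) * normSq (y 0)) + normSq (x 0) * normSq (y 1)
      - normSq (x 1) * normSq (y 0) - 2 * (normSq (x 1) * normSq (y 1))
      + 2 * t * ((starRingEnd ℂ) (x 0 * y 0) * (x 1 * y 1)).re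
      + 2 * s * ((starRingEnd ℂ) (x 0 * y 1) * (x 1 * y 0)).re := by
  simp [kvec, mulVec, dotProduct, Fin.sum_univ_four, Matrix.cons_val_zero, Matrix.cons_val_one,
    normSq_apply, Complex.mul_re, Complex.mul_im, Complex.add_re]
  ring

lemma unit_normSq (x : Fin 2 → ℂ) (h : star x ⬝ᵥ x = 1) :
    normSq (x 0) + normSq (x 1) = 1 := by
  have := congrArg Complex.re h
  simpa [dotProduct, Fin.sum_univ_two, normSq_apply, Complex.mul_re] using this

lemma cross_abs (z1 w1 z2 w2 : ℂ) :
    |((starRingEnd ℂ) (z1*w1) * (z2*w2)).re| ≤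
      Real.sqrt (normSq z1 * normSq z2) * Real.sqrt (normSq w1 * normSq w2) := by
  calc |((starRingEnd ℂ) (z1*w1) * (z2*w2)).re|
      ≤ ‖(starRingEnd ℂ) (z1*w1) * (z2*w2)‖ := Complex.abs_re_le_norm _
    _ = (‖z1‖ * ‖z2‖) * (‖w1‖ * ‖w2‖) := by
        rw [norm_mul, Complex.norm_conj, norm_mul, norm_mul]; ring
    _ = Real.sqrt (normSq z1 * normSq z2) * Real.sqrt (normSq w1 * normSq w2) := by
        rw [Real.sqrt_mul (normSq_nonneg _), Real.sqrt_mul (normSq_nonneg _),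
          ← Complex.norm_def, ← Complex.norm_def, ← Complex.norm_def, ← Complex.norm_def]

end Aux

/-- For `Q_{t,s} = [[2,0,0,t],[0,1,s,0],[0,s,-1,0],[t,0,0,-2]]` with `t,s ≥ 0` and
`p = t + s`, the maximum of the expectation over unit product vectors is `2` if
`p < √3` and `√((1+p²)(9+p²))/(2p)` if `p ≥ √3`; the minimum is its negative. -/
theorem LNR_Qts (t s : ℝ) (ht : 0 ≤ t) (hs : 0 ≤ s) :
    let Q : Matrix (Fin 4) (Fin 4) ℂ :=
      !![2, 0, 0, (t : ℂ); 0, 1, (s : ℂ), 0; 0, (s : ℂ), -1, 0; (t : ℂ), 0, 0, -2]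
    let p : ℝ := t + s
    let γ : ℝ := if p < Real.sqrt 3 then 2
      else Real.sqrt ((1 + p ^ 2) * (9 + p ^ 2)) / (2 * p)
    let S : Set ℝ := {r | ∃ x y : Fin 2 → ℂ, star x ⬝ᵥ x = 1 ∧ star y ⬝ᵥ y = 1 ∧
      (star (kvec x y) ⬝ᵥ Q.mulVec (kvec x y)).re = r}
    IsGreatest S γ ∧ IsLeast S (-γ) := by
  intro Q p γ S
  have hγdef : γ = if p < Real.sqrt 3 then 2
      else Real.sqrt ((1 + p ^ 2) * (9 + p ^ 2)) / (2 * p) := rfl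
  have hpts : t + s = p := rfl
  have hp0 : 0 ≤ p := by rw [← hpts]; positivity
  -- bounds
  have hbound : ∀ r ∈ S, r ≤ γ ∧ -γ ≤ r := by
    rintro r ⟨x, y, hx, hy, hE⟩
    rw [show Q = !![2, 0, 0, (t : ℂ); 0, 1, (s : ℂ), 0; 0, (s : ℂ), -1, 0; (t : ℂ), 0, 0, -2] from rfl,
      expectRe t s x y] at hE
    set n0 := Complex.normSq (x 0) with hn0def
    set n1 := Complex.normSq (x 1) with hn1def
    set m0 := Complex.normSq (y 0) with hm0def
    set m1 := Complex.normSq (y 1) with hm1def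
    have hxn : n0 + n1 = 1 := unit_normSq x hx
    have hyn : m0 + m1 = 1 := unit_normSq y hy
    have hn0 : 0 ≤ n0 := Complex.normSq_nonneg _
    have hn1 : 0 ≤ n1 := Complex.normSq_nonneg _
    have hm0 : 0 ≤ m0 := Complex.normSq_nonneg _
    have hm1 : 0 ≤ m1 := Complex.normSq_nonneg _
    set M := Real.sqrt (n0*n1) * Real.sqrt (m0*m1) with hMdef
    have hR1 := cross_abs (x 0) (y 0) (x 1) (y 1)
    have hR2 := cross_abs (x 0) (y 1) (x 1) (y 0)
    rw [← hn0def, ← hn1def, ← hm0def, ← hm1def] at hR1 hR2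
    rw [show Real.sqrt (m1*m0) = Real.sqrt (m0*m1) from by rw [mul_comm]] at hR2
    rw [abs_le] at hR1 hR2
    have hMn : 0 ≤ M := by positivity
    -- upper bound
    have hub := boundL p n0 m0 γ hp0 hn0 (by linarith) hm0 (by linarith) hγdef
    have hMeq : Real.sqrt (n0*(1-n0)) * Real.sqrt (m0*(1-m0)) = M := by
      rw [hMdef, show (1-n0) = n1 from by linarith, show (1-m0) = m1 from by linarith]
    rw [hMeq] at hub
    -- lower bound via complementary point
    have hlb := boundL p n1 m1 γ hp0 hn1 (by linarith) hm1 (by linarith) hγdef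
    have hMeq' : Real.sqrt (n1*(1-n1)) * Real.sqrt (m1*(1-m1)) = M := by
      rw [hMdef, show (1-n1) = n0 from by linarith, show (1-m1) = m0 from by linarith,
        mul_comm n1 n0, mul_comm m1 m0]
    rw [hMeq'] at hlb
    have ht1 := mul_le_mul_of_nonneg_left hR1.2 (show (0:ℝ) ≤ 2*t by linarith)
    have ht2 := mul_le_mul_of_nonneg_left hR2.2 (show (0:ℝ) ≤ 2*s by linarith)
    have ht1' := mul_le_mul_of_nonneg_left hR1.1 (show (0:ℝ) ≤ 2*t by linarith)
    have ht2' := mul_le_mul_of_nonneg_left hR2.1 (show (0:ℝ) ≤ 2*s by linarith)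
    have hdiag : 2*(n0*m0) + n0*m1 - n1*m0 - 2*(n1*m1) = 3*n0 + m0 - 2 := by
      have e1 : n1 = 1 - n0 := by linarith
      have e2 : m1 = 1 - m0 := by linarith
      rw [e1, e2]; ring
    have hp2 : 2*p*M = 2*t*M + 2*s*M := by rw [← hpts]; ring
    constructor
    · nlinarith [hub, hE, ht1, ht2, hdiag, hp2]
    · nlinarith [hlb, hE, ht1', ht2', hdiag, hp2]
  -- memberships
  have hmemmax : γ ∈ S ∧ -γ ∈ S := by
    by_cases hcase : p < Real.sqrt 3
    · have hγ2 : γ = 2 := by rw [hγdef, if_pos hcase]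
      constructor
      · exact ⟨![((1:ℝ):ℂ), ((0:ℝ):ℂ)], ![((1:ℝ):ℂ), ((0:ℝ):ℂ)],
          unitR 1 0 (by norm_num), unitR 1 0 (by norm_num), by
            rw [show Q = !![2, 0, 0, (t : ℂ); 0, 1, (s : ℂ), 0; 0, (s : ℂ), -1, 0; (t : ℂ), 0, 0, -2] from rfl,
              EvalR t s 1 0 1 0, hγ2]; norm_num⟩
      · exact ⟨![((0:ℝ):ℂ), ((1:ℝ):ℂ)], ![((0:ℝ):ℂ), ((1:ℝ):ℂ)],
          unitR 0 1 (by norm_num), unitR 0 1 (by norm_num), by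
            rw [show Q = !![2, 0, 0, (t : ℂ); 0, 1, (s : ℂ), 0; 0, (s : ℂ), -1, 0; (t : ℂ), 0, 0, -2] from rfl,
              EvalR t s 0 1 0 1, hγ2]; norm_num⟩
    · push_neg at hcase
      obtain ⟨α, β, hα0, hα1, hβ0, hβ1, hIdent⟩ := optData p hcase
      have hγval : γ = Real.sqrt ((1+p^2)*(9+p^2))/(2*p) := by
        rw [hγdef, if_neg (not_lt.2 hcase)]
      have h1α : (0:ℝ) ≤ 1 - α := by linarith
      have h1β : (0:ℝ) ≤ 1 - β := by linarith
      constructor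
      · refine ⟨![((Real.sqrt α :ℝ):ℂ), ((Real.sqrt (1-α) :ℝ):ℂ)],
          ![((Real.sqrt β :ℝ):ℂ), ((Real.sqrt (1-β) :ℝ):ℂ)],
          unitR _ _ (by rw [Real.sq_sqrt hα0, Real.sq_sqrt h1α]; ring),
          unitR _ _ (by rw [Real.sq_sqrt hβ0, Real.sq_sqrt h1β]; ring), ?_⟩
        rw [show Q = !![2, 0, 0, (t : ℂ); 0, 1, (s : ℂ), 0; 0, (s : ℂ), -1, 0; (t : ℂ), 0, 0, -2] from rfl,
          EvalR, Real.sq_sqrt hα0, Real.sq_sqrt h1α, Real.sq_sqrt hβ0, Real.sq_sqrt h1β, hγval, hpts]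
        have hm : Real.sqrt α * Real.sqrt (1-α) * Real.sqrt β * Real.sqrt (1-β)
            = Real.sqrt (α*(1-α)) * Real.sqrt (β*(1-β)) := by
          rw [Real.sqrt_mul hα0, Real.sqrt_mul hβ0]; ring
        rw [hm]
        linear_combination hIdent
      · refine ⟨![((Real.sqrt (1-α) :ℝ):ℂ), ((Real.sqrt α :ℝ):ℂ)],
          ![((Real.sqrt (1-β) :ℝ):ℂ), ((-Real.sqrt β :ℝ):ℂ)],
          unitR _ _ (by rw [Real.sq_sqrt hα0, Real.sq_sqrt h1α]; ring),
          unitR _ _ (by rw [neg_sq, Real.sq_sqrt hβ0, Real.sq_sqrt h1β]; ring), ?_⟩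
        rw [show Q = !![2, 0, 0, (t : ℂ); 0, 1, (s : ℂ), 0; 0, (s : ℂ), -1, 0; (t : ℂ), 0, 0, -2] from rfl,
          EvalR, neg_sq, Real.sq_sqrt hα0, Real.sq_sqrt h1α, Real.sq_sqrt hβ0, Real.sq_sqrt h1β,
          hγval, hpts]
        have hm' : Real.sqrt (1-α) * Real.sqrt α * Real.sqrt (1-β) * -Real.sqrt β
            = -(Real.sqrt (α*(1-α)) * Real.sqrt (β*(1-β))) := by
          rw [Real.sqrt_mul hα0, Real.sqrt_mul hβ0]; ring
        rw [hm']
        linear_combination -hIdent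
  exact ⟨⟨hmemmax.1, fun r hr => (hbound r hr).1⟩, ⟨hmemmax.2, fun r hr => (hbound r hr).2⟩⟩
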